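/- Let p_1 ≺ p_2 ≺ ... ≺ p_{⌊d/2⌋+1} and q_1 ≺ q_2 ≺ ... ≺ q_{⌈d/2⌉+1} be two disjoint increasing sequences of points on the d-dimensional moment curve (ordered by their parameters). Then the ⌊d/2⌋-simplex Conv{p_i} and the ⌈d/2⌉-simplex Conv{q_j} have a common point in their relative interiors if and only if the two sequences interleave: every open parameter interval (q_j, q_{j+1}) contains exactly one p_i and every open parameter interval (p_i, p_{i+1}) contains exactly one q_j. -/

import Mathlib

def momentCurve (d : ℕ) (t : ℝ) : Fin d → ℝ := fun j => t ^ ((j : ℕ) + 1)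

open Finset

lemma momentCurve_powsum {d : ℕ} {ι : Type*} {s : Finset ι} {t : ι → ℝ} {w : ι → ℝ}
    (hw0 : ∑ c ∈ s, w c = 0) (hw1 : ∑ c ∈ s, w c • momentCurve d (t c) = 0) :
    ∀ r : ℕ, r ≤ d → ∑ c ∈ s, w c * t c ^ r = 0 := by
  intro r hr
  rcases r with _ | j
  · simpa using hw0
  · have hj : j < d := hr
    have := congrFun hw1 ⟨j, hj⟩
    simpa [momentCurve, Finset.sum_apply] using this

lemma momentCurve_affineIndependent {d : ℕ} {ι : Type*} [Fintype ι]
    (hn : Fintype.card ι ≤ d + 1) {t : ι → ℝ} (ht : Function.Injective t) :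
    AffineIndependent ℝ (fun i => momentCurve d (t i)) := by
  rw [affineIndependent_iff]
  intro s w hw0 hw1 e he
  classical
  set W : ι → ℝ := fun c => if c ∈ s then w c else 0 with hW
  have hWs : ∀ r : ℕ, ∑ c, W c * t c ^ r = ∑ c ∈ s, w c * t c ^ r := by
    intro r
    rw [← Finset.sum_subset (Finset.subset_univ s)]
    · exact Finset.sum_congr rfl fun c hc => by simp [hW, hc]
    · intro c _ hc; simp [hW, hc]
  have key : ∀ r : ℕ, r ≤ d → ∑ c, W c * t c ^ r = 0 := fun r hr =>
    (hWs r).trans (momentCurve_powsum hw0 hw1 r hr)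
  have hcard := Fintype.card ι
  set eq : Fin (Fintype.card ι) ≃ ι := (Fintype.equivFin ι).symm with heq
  have hv : (W ∘ eq) = 0 := by
    apply Matrix.eq_zero_of_forall_pow_sum_mul_pow_eq_zero (f := t ∘ eq)
      (ht.comp eq.injective)
    intro i
    have hid : ((i : ℕ)) ≤ d := by have := i.isLt; omega
    have := key (i : ℕ) hid
    simpa [Function.comp] using (Equiv.sum_comp eq (fun c => W c * t c ^ (i : ℕ))).trans this
  have hWzero : ∀ c, W c = 0 := by
    intro c
    have := congrFun hv (eq.symm c)
    simpa using this
  have h := hWzero e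
  rw [hW] at h
  simpa [he] using h

lemma momentCurve_dep_ne_zero {d : ℕ} {ι : Type*} [Fintype ι] [DecidableEq ι]
    (hcard : Fintype.card ι = d + 2) {t : ι → ℝ} (ht : Function.Injective t)
    {w : ι → ℝ} (h0 : ∑ c, w c = 0) (h1 : ∑ c, w c • momentCurve d (t c) = 0)
    (hw : w ≠ 0) : ∀ c, w c ≠ 0 := by
  intro c₀ hc₀
  have hcards : Fintype.card {c : ι // c ≠ c₀} ≤ d + 1 := by
    rw [Fintype.card_subtype_compl, Fintype.card_subtype_eq, hcard]; omega
  have hA : AffineIndependent ℝ (fun x : {c : ι // c ≠ c₀} => momentCurve d (t x)) :=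
    momentCurve_affineIndependent hcards (ht.comp Subtype.val_injective)
  have hmem : ∀ x : ι, x ∈ Finset.univ.erase c₀ ↔ x ≠ c₀ := by simp
  have hsum0 : ∑ x : {c : ι // c ≠ c₀}, w ↑x = 0 := by
    rw [← Finset.sum_subtype (Finset.univ.erase c₀) hmem w]
    rwa [← Finset.add_sum_erase _ w (Finset.mem_univ c₀), hc₀, zero_add] at h0
  have hsum1 : ∑ x : {c : ι // c ≠ c₀}, w ↑x • momentCurve d (t ↑x) = 0 := by
    rw [← Finset.sum_subtype (Finset.univ.erase c₀) hmem
      (fun c => w c • momentCurve d (t c))]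
    rwa [← Finset.add_sum_erase _ (fun c => w c • momentCurve d (t c))
      (Finset.mem_univ c₀), hc₀, zero_smul, zero_add] at h1
  have hall : ∀ x : {c : ι // c ≠ c₀}, w ↑x = 0 := fun x =>
    affineIndependent_iff.1 hA Finset.univ (fun y => w ↑y) hsum0 hsum1 x (Finset.mem_univ x)
  apply hw
  funext c
  by_cases hc : c = c₀
  · rw [hc]; exact hc₀
  · exact hall ⟨c, hc⟩

lemma momentCurve_dep_alternate {d : ℕ} {ι : Type*} [Fintype ι] [DecidableEq ι]
    (hcard : Fintype.card ι = d + 2) {t : ι → ℝ} (ht : Function.Injective t)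
    {w : ι → ℝ} (h0 : ∑ c, w c = 0) (h1 : ∑ c, w c • momentCurve d (t c) = 0)
    (hwne : ∀ c, w c ≠ 0) {a b : ι} (hab : t a < t b)
    (hbet : ∀ c, ¬ (t a < t c ∧ t c < t b)) : w a * w b < 0 := by
  classical
  have hane : a ≠ b := fun h => lt_irrefl _ (h ▸ hab)
  set A : Finset ι := Finset.univ \ {a, b} with hA
  set P : Polynomial ℝ := ∏ j ∈ A, (Polynomial.X - Polynomial.C (t j)) with hP
  have hmonic : ∀ j ∈ A, (Polynomial.X - Polynomial.C (t j)).Monic :=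
    fun j _ => Polynomial.monic_X_sub_C _
  have hdegP : P.natDegree = A.card := by
    rw [hP, Polynomial.natDegree_prod_of_monic _ _ hmonic]
    simp
  have hcardA : A.card = d := by
    rw [hA, Finset.card_sdiff_of_subset (by simp)]
    rw [Finset.card_pair hane, Finset.card_univ, hcard]; omega
  have hdeg : P.natDegree < d + 1 := by rw [hdegP, hcardA]; omega
  have hsum : ∑ c, w c * P.eval (t c) = 0 := by
    have heval : ∀ c, P.eval (t c) = ∑ r ∈ Finset.range (d+1), P.coeff r * t c ^ r :=
      fun c => Polynomial.eval_eq_sum_range' hdeg _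
    simp_rw [heval, Finset.mul_sum]
    rw [Finset.sum_comm]
    apply Finset.sum_eq_zero
    intro r hr
    have hrd : r ≤ d := by have := Finset.mem_range.1 hr; omega
    have := momentCurve_powsum h0 h1 r hrd
    calc ∑ c, w c * (P.coeff r * t c ^ r) = P.coeff r * ∑ c, w c * t c ^ r := by
          rw [Finset.mul_sum]; apply Finset.sum_congr rfl; intro c _; ring
      _ = 0 := by rw [this, mul_zero]
  have hzeroA : ∀ c ∈ A, P.eval (t c) = 0 := by
    intro c hc
    rw [hP, Polynomial.eval_prod]
    apply Finset.prod_eq_zero hc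
    simp
  have hpair : w a * P.eval (t a) + w b * P.eval (t b) = 0 := by
    have hsub : ∑ c ∈ ({a, b} : Finset ι), w c * P.eval (t c)
        = ∑ c, w c * P.eval (t c) := by
      apply Finset.sum_subset (Finset.subset_univ _)
      intro x _ hx
      have hxA : x ∈ A := by simp [hA, Finset.mem_sdiff]; simpa using hx
      rw [hzeroA x hxA, mul_zero]
    rw [Finset.sum_pair hane] at hsub
    rw [hsub, hsum]
  have hpos : 0 < P.eval (t a) * P.eval (t b) := by
    rw [hP, Polynomial.eval_prod, Polynomial.eval_prod, ← Finset.prod_mul_distrib]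
    apply Finset.prod_pos
    intro j hj
    simp only [Polynomial.eval_sub, Polynomial.eval_X, Polynomial.eval_C]
    have hja : j ≠ a := by intro h; rw [hA] at hj; simp [h] at hj
    have hjb : j ≠ b := by intro h; rw [hA] at hj; simp [h] at hj
    have h1' : t j ≠ t a := fun h => hja (ht h)
    have h2' : t j ≠ t b := fun h => hjb (ht h)
    rcases lt_or_gt_of_ne h1' with hlt | hgt
    · exact mul_pos (by linarith) (by linarith)
    · have : ¬ t j < t b := fun hh => hbet j ⟨hgt, hh⟩
      have : t b < t j := lt_of_le_of_ne (not_lt.1 this) (Ne.symm h2')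
      exact mul_pos_of_neg_of_neg (by linarith) (by linarith)
  have hPb : P.eval (t b) ≠ 0 := by
    intro h; rw [h, mul_zero] at hpos; exact lt_irrefl _ hpos
  have hprod : (w a * w b) * (P.eval (t a) * P.eval (t b))
      = -((w b * P.eval (t b))^2) := by
    have hx : w a * P.eval (t a) = -(w b * P.eval (t b)) := by linarith
    calc (w a * w b) * (P.eval (t a) * P.eval (t b))
        = (w a * P.eval (t a)) * (w b * P.eval (t b)) := by ring
      _ = -(w b * P.eval (t b)) * (w b * P.eval (t b)) := by rw [hx]
      _ = -((w b * P.eval (t b))^2) := by ring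
  have hne : w b * P.eval (t b) ≠ 0 := mul_ne_zero (hwne b) hPb
  have hsq : 0 < (w b * P.eval (t b))^2 :=
    lt_of_le_of_ne (sq_nonneg _) (Ne.symm (pow_ne_zero 2 hne))
  nlinarith [hpos, hprod, hsq]

lemma pos_combo_mem_intrinsicInterior {E : Type*} [NormedAddCommGroup E]
    [NormedSpace ℝ E] [FiniteDimensional ℝ E] {n : ℕ} {p : Fin (n+1) → E}
    (hp : AffineIndependent ℝ p) {w : Fin (n+1) → ℝ} (hw : ∀ i, 0 < w i)
    (hw1 : ∑ i, w i = 1) :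
    ∑ i, w i • p i ∈ intrinsicInterior ℝ (convexHull ℝ (Set.range p)) := by
  classical
  set V : Submodule ℝ E := vectorSpan ℝ (Set.range p) with hV
  have hmem : ∀ i, p i - p 0 ∈ V := fun i => by
    have := vsub_mem_vectorSpan ℝ (Set.mem_range_self (f := p) i) (Set.mem_range_self (f := p) 0)
    simpa [vsub_eq_sub] using this
  set q : Fin (n+1) → V := fun i => ⟨p i - p 0, hmem i⟩ with hq
  set φ : V →ᵃⁱ[ℝ] E :=
    (AffineIsometryEquiv.constVAdd ℝ E (p 0)).toAffineIsometry.comp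
      V.subtypeₗᵢ.toAffineIsometry with hφ
  have hφ_apply : ∀ x : V, φ x = p 0 + ↑x := by
    intro x
    simp [hφ, AffineIsometryEquiv.constVAdd, vadd_eq_add]
    rfl
  have hφq : ∀ i, φ (q i) = p i := by
    intro i; rw [hφ_apply]; simp [hq]
  have hφcomp : (φ.toAffineMap ∘ q) = p := funext fun i => hφq i
  have hq_ind : AffineIndependent ℝ q := by
    rw [← φ.toAffineMap.affineIndependent_iff φ.injective, hφcomp]; exact hp
  have himg : V.subtype '' (Set.range q -ᵥ Set.range q) = Set.range p -ᵥ Set.range p := by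
    ext x
    constructor
    · rintro ⟨y, ⟨z1, ⟨i, rfl⟩, z2, ⟨j, rfl⟩, rfl⟩, rfl⟩
      exact ⟨p i, ⟨i, rfl⟩, p j, ⟨j, rfl⟩, by simp [hq, vsub_eq_sub]⟩
    · rintro ⟨z1, ⟨i, rfl⟩, z2, ⟨j, rfl⟩, rfl⟩
      exact ⟨q i -ᵥ q j, ⟨q i, ⟨i, rfl⟩, q j, ⟨j, rfl⟩, rfl⟩, by simp [hq, vsub_eq_sub]⟩
  have hmap : Submodule.map V.subtype (vectorSpan ℝ (Set.range q)) = V := by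
    rw [vectorSpan, Submodule.map_span, himg, hV, vectorSpan]
  have hvs_top : vectorSpan ℝ (Set.range q) = ⊤ := by
    apply Submodule.map_injective_of_injective (V.injective_subtype)
    rw [hmap, Submodule.map_top, Submodule.range_subtype]
  have hq_top : affineSpan ℝ (Set.range q) = ⊤ := by
    rw [← AffineSubspace.direction_eq_top_iff_of_nonempty
      ((Set.range_nonempty q).mono (subset_affineSpan ℝ _))]
    rw [direction_affineSpan]; exact hvs_top
  set b : AffineBasis (Fin (n+1)) ℝ V := ⟨q, hq_ind, hq_top⟩ with hb
  have hbcoe : (b : Fin (n+1) → V) = q := rfl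
  -- the point y in V
  set y : V := ∑ i, w i • q i with hy
  have hyc : y = Finset.univ.affineCombination ℝ q w := by
    rw [Finset.affineCombination_eq_linear_combination _ _ _ hw1]
  have hcoord : ∀ i, b.coord i y = w i := by
    intro i
    rw [hyc]
    exact AffineBasis.coord_apply_combination_of_mem b (Finset.mem_univ i) hw1
  have hy_int : y ∈ interior (convexHull ℝ (Set.range q)) := by
    have := b.interior_convexHull
    rw [hbcoe] at this
    rw [this]
    intro i
    rw [hcoord i]
    exact hw i
  have hy_intr : y ∈ intrinsicInterior ℝ (convexHull ℝ (Set.range q)) :=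
    interior_subset_intrinsicInterior hy_int
  have himage : φ '' intrinsicInterior ℝ (convexHull ℝ (Set.range q))
      = intrinsicInterior ℝ (convexHull ℝ (Set.range p)) := by
    rw [← AffineIsometry.image_intrinsicInterior]
    congr 1
    have h2 : (⇑φ) '' (convexHull ℝ (Set.range q)) = convexHull ℝ (⇑φ '' Set.range q) := by
      rw [← φ.coe_toAffineMap, AffineMap.image_convexHull]
    rw [h2, ← Set.range_comp]
    rw [← φ.coe_toAffineMap, hφcomp]
  have hφy : φ y = ∑ i, w i • p i := by
    rw [hφ_apply]
    have hcoe : ((y : V) : E) = ∑ i, w i • (p i - p 0) := by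
      rw [hy]
      push_cast
      rfl
    rw [hcoe]
    have : ∑ i, w i • (p i - p 0) = (∑ i, w i • p i) - (∑ i, w i) • p 0 := by
      rw [Finset.sum_smul]
      rw [← Finset.sum_sub_distrib]
      congr 1
      funext i
      rw [smul_sub]
    rw [this, hw1, one_smul]
    abel
  rw [← hφy, ← himage]
  exact ⟨y, hy_intr, rfl⟩

lemma exists_nonneg_combo {E : Type*} [AddCommGroup E] [Module ℝ E] {N : ℕ}
    {v : Fin N → E} {x : E} (hx : x ∈ convexHull ℝ (Set.range v)) :
    ∃ w : Fin N → ℝ, (∀ i, 0 ≤ w i) ∧ ∑ i, w i = 1 ∧ ∑ i, w i • v i = x := by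
  classical
  rw [convexHull_range_eq_exists_affineCombination] at hx
  obtain ⟨t, w, hw0, hw1, hx⟩ := hx
  refine ⟨fun i => if i ∈ t then w i else 0, ?_, ?_, ?_⟩
  · intro i
    by_cases hi : i ∈ t
    · simp only [if_pos hi]; exact hw0 _ hi
    · simp only [if_neg hi]; exact le_refl 0
  · rw [← Finset.sum_subset (Finset.subset_univ t)]
    · rw [← hw1]; exact Finset.sum_congr rfl fun c hc => by simp only [if_pos hc]
    · intro c _ hc; simp only [if_neg hc]
  · rw [← hx, Finset.affineCombination_eq_linear_combination _ _ _ hw1]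
    rw [← Finset.sum_subset (Finset.subset_univ t)]
    · exact Finset.sum_congr rfl fun c hc => by simp only [if_pos hc]
    · intro c _ hc; simp only [if_neg hc, zero_smul]

lemma exists_dep {d : ℕ} {ι : Type*} [Fintype ι] (hcard : Fintype.card ι = d + 2)
    (p : ι → (Fin d → ℝ)) :
    ∃ w : ι → ℝ, w ≠ 0 ∧ ∑ c, w c = 0 ∧ ∑ c, w c • p c = 0 := by
  have hnot : ¬ AffineIndependent ℝ p := by
    intro h
    have h1 := h.card_le_finrank_succ
    have h2 : Module.finrank ℝ (vectorSpan ℝ (Set.range p)) ≤ Module.finrank ℝ (Fin d → ℝ) :=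
      Submodule.finrank_le _
    rw [Module.finrank_pi, Fintype.card_fin] at h2
    rw [hcard] at h1
    omega
  rw [affineIndependent_iff_of_fintype] at hnot
  push_neg at hnot
  obtain ⟨w, hw0, hwv, i, hwi⟩ := hnot
  refine ⟨w, fun h => hwi (congrFun h i), hw0, ?_⟩
  rwa [Finset.weightedVSub_eq_linear_combination _ hw0] at hwv

set_option maxHeartbeats 1600000 in
theorem moment_curve_crossing_iff_interleave (d : ℕ)
    (s : Fin (d / 2 + 1) → ℝ) (u : Fin ((d + 1) / 2 + 1) → ℝ)
    (hs : StrictMono s) (hu : StrictMono u)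
    (hdisj : ∀ i j, s i ≠ u j) :
    (intrinsicInterior ℝ (convexHull ℝ (Set.range fun i => momentCurve d (s i))) ∩
     intrinsicInterior ℝ (convexHull ℝ (Set.range fun j => momentCurve d (u j)))).Nonempty ↔
    ((∀ j : Fin ((d + 1) / 2), ∃! i, u j.castSucc < s i ∧ s i < u j.succ) ∧
     (∀ i : Fin (d / 2), ∃! j, s i.castSucc < u j ∧ u j < s i.succ)) := by
  classical
  set P : Fin (d/2+1) → (Fin d → ℝ) := fun i => momentCurve d (s i) with hPdef
  set Q : Fin ((d+1)/2+1) → (Fin d → ℝ) := fun j => momentCurve d (u j) with hQdef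
  set t : Fin (d/2+1) ⊕ Fin ((d+1)/2+1) → ℝ := Sum.elim s u with htdef
  have htinj : Function.Injective t := by
    rintro (i1 | j1) (i2 | j2) h <;>
      simp only [htdef, Sum.elim_inl, Sum.elim_inr] at h
    · exact congrArg Sum.inl (hs.injective h)
    · exact absurd h (hdisj i1 j2)
    · exact absurd h.symm (hdisj i2 j1)
    · exact congrArg Sum.inr (hu.injective h)
  have hcard : Fintype.card (Fin (d/2+1) ⊕ Fin ((d+1)/2+1)) = d + 2 := by
    rw [Fintype.card_sum, Fintype.card_fin, Fintype.card_fin]; omega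
  constructor
  · -- crossing → interleave
    rintro ⟨x, hx1, hx2⟩
    obtain ⟨a, ha0, ha1, hax⟩ := exists_nonneg_combo (intrinsicInterior_subset hx1)
    obtain ⟨b, hb0, hb1, hbx⟩ := exists_nonneg_combo (intrinsicInterior_subset hx2)
    set w : Fin (d/2+1) ⊕ Fin ((d+1)/2+1) → ℝ := Sum.elim a (fun j => -(b j)) with hwdef
    have h0 : ∑ c, w c = 0 := by
      rw [Fintype.sum_sum_type]
      simp only [hwdef, Sum.elim_inl, Sum.elim_inr, Finset.sum_neg_distrib]
      rw [ha1, hb1]; ring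
    have h1 : ∑ c, w c • momentCurve d (t c) = 0 := by
      rw [Fintype.sum_sum_type]
      have e1 : ∑ i, w (Sum.inl i) • momentCurve d (t (Sum.inl i)) = x := by
        simp only [hwdef, htdef, Sum.elim_inl]; exact hax
      have e2 : ∑ j, w (Sum.inr j) • momentCurve d (t (Sum.inr j)) = -x := by
        simp only [hwdef, htdef, Sum.elim_inr, neg_smul, Finset.sum_neg_distrib]
        rw [hbx]
      rw [e1, e2]; abel
    have hwnz : w ≠ 0 := by
      intro h
      have : (1 : ℝ) = 0 := by
        rw [← ha1]
        rw [Finset.sum_eq_zero]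
        intro i _
        have := congrFun h (Sum.inl i)
        simpa [hwdef] using this
      norm_num at this
    have hwne := momentCurve_dep_ne_zero hcard htinj h0 h1 hwnz
    have halt := fun {aa bb : Fin (d/2+1) ⊕ Fin ((d+1)/2+1)} (hab : t aa < t bb)
      (hbet : ∀ c, ¬ (t aa < t c ∧ t c < t bb)) =>
      momentCurve_dep_alternate hcard htinj h0 h1 hwne hab hbet
    have hapos : ∀ i, 0 < a i := fun i =>
      lt_of_le_of_ne (ha0 i) (fun h => hwne (Sum.inl i) (by simp [hwdef, ← h]))
    have hbpos : ∀ j, 0 < b j := fun j =>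
      lt_of_le_of_ne (hb0 j) (fun h => hwne (Sum.inr j) (by simp [hwdef, ← h]))
    constructor
    · -- each u-gap has exactly one s
      intro j
      have hex : ∃ i, u j.castSucc < s i ∧ s i < u j.succ := by
        by_contra hno
        push_neg at hno
        have hlt : t (Sum.inr j.castSucc) < t (Sum.inr j.succ) := by
          simp only [htdef, Sum.elim_inr]
          exact hu Fin.castSucc_lt_succ
        have hbet : ∀ c, ¬ (t (Sum.inr j.castSucc) < t c ∧ t c < t (Sum.inr j.succ)) := by
          rintro (i' | l) ⟨hc1, hc2⟩ <;>
            simp only [htdef, Sum.elim_inl, Sum.elim_inr] at hc1 hc2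
          · exact absurd hc2 (not_lt.2 (hno i' hc1))
          · have hl1 := Fin.lt_def.1 (hu.lt_iff_lt.1 hc1)
            have hl2 := Fin.lt_def.1 (hu.lt_iff_lt.1 hc2)
            simp only [Fin.coe_castSucc, Fin.val_succ] at hl1 hl2
            omega
        have := halt hlt hbet
        have hneg : w (Sum.inr j.castSucc) < 0 := by
          simp only [hwdef, Sum.elim_inr]; linarith [hbpos j.castSucc]
        have hneg' : w (Sum.inr j.succ) < 0 := by
          simp only [hwdef, Sum.elim_inr]; linarith [hbpos j.succ]
        nlinarith
      obtain ⟨i, hi⟩ := hex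
      refine ⟨i, hi, ?_⟩
      intro i' hi'
      -- uniqueness
      by_contra hne
      -- wlog order
      have key : ∀ i1 i2 : Fin (d/2+1), i1 < i2 →
          u j.castSucc < s i1 → s i1 < u j.succ →
          u j.castSucc < s i2 → s i2 < u j.succ → False := by
        intro i1 i2 h12 hA1 hA2 hB1 hB2
        have hi1k : (i1 : ℕ) + 1 < d/2 + 1 + 1 := by
          have := Fin.lt_def.1 h12; have := i2.isLt; omega
        set i1s : Fin (d/2+1) := ⟨(i1 : ℕ) + 1, by omega⟩ with hi1s
        have hlt : t (Sum.inl i1) < t (Sum.inl i1s) := by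
          simp only [htdef, Sum.elim_inl]
          exact hs (by rw [Fin.lt_def]; simp [hi1s])
        have hle : s i1s ≤ s i2 := by
          apply hs.monotone
          rw [Fin.le_def]
          have := Fin.lt_def.1 h12
          simp [hi1s]; omega
        have hbet : ∀ c, ¬ (t (Sum.inl i1) < t c ∧ t c < t (Sum.inl i1s)) := by
          rintro (i' | l) ⟨hc1, hc2⟩ <;>
            simp only [htdef, Sum.elim_inl, Sum.elim_inr] at hc1 hc2
          · have hl1 := Fin.lt_def.1 (hs.lt_iff_lt.1 hc1)
            have hl2 := Fin.lt_def.1 (hs.lt_iff_lt.1 hc2)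
            simp only [hi1s] at hl2
            omega
          · -- u l strictly between s i1 and s i1s, so inside the u-gap
            have hgap1 : u j.castSucc < u l := lt_trans hA1 hc1
            have hgap2 : u l < u j.succ := lt_of_lt_of_le (lt_of_lt_of_le hc2 hle) (le_of_lt hB2)
            have hl1 := Fin.lt_def.1 (hu.lt_iff_lt.1 hgap1)
            have hl2 := Fin.lt_def.1 (hu.lt_iff_lt.1 hgap2)
            simp only [Fin.coe_castSucc, Fin.val_succ] at hl1 hl2
            omega
        have := halt hlt hbet
        have hp1 : 0 < w (Sum.inl i1) := by simp only [hwdef, Sum.elim_inl]; exact hapos i1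
        have hp2 : 0 < w (Sum.inl i1s) := by simp only [hwdef, Sum.elim_inl]; exact hapos i1s
        nlinarith
      rcases lt_trichotomy i' i with hlt | heq | hgt
      · exact key i' i hlt hi'.1 hi'.2 hi.1 hi.2
      · exact hne heq
      · exact key i i' hgt hi.1 hi.2 hi'.1 hi'.2
    · -- each s-gap has exactly one u
      intro i
      have hex : ∃ j, s i.castSucc < u j ∧ u j < s i.succ := by
        by_contra hno
        push_neg at hno
        have hlt : t (Sum.inl i.castSucc) < t (Sum.inl i.succ) := by
          simp only [htdef, Sum.elim_inl]
          exact hs Fin.castSucc_lt_succ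
        have hbet : ∀ c, ¬ (t (Sum.inl i.castSucc) < t c ∧ t c < t (Sum.inl i.succ)) := by
          rintro (i' | l) ⟨hc1, hc2⟩ <;>
            simp only [htdef, Sum.elim_inl, Sum.elim_inr] at hc1 hc2
          · have hl1 := Fin.lt_def.1 (hs.lt_iff_lt.1 hc1)
            have hl2 := Fin.lt_def.1 (hs.lt_iff_lt.1 hc2)
            simp only [Fin.coe_castSucc, Fin.val_succ] at hl1 hl2
            omega
          · exact absurd hc2 (not_lt.2 (hno l hc1))
        have := halt hlt hbet
        have hp1 : 0 < w (Sum.inl i.castSucc) := by simp only [hwdef, Sum.elim_inl]; exact hapos _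
        have hp2 : 0 < w (Sum.inl i.succ) := by simp only [hwdef, Sum.elim_inl]; exact hapos _
        nlinarith
      obtain ⟨j, hj⟩ := hex
      refine ⟨j, hj, ?_⟩
      intro j' hj'
      by_contra hne
      have key : ∀ j1 j2 : Fin ((d+1)/2+1), j1 < j2 →
          s i.castSucc < u j1 → u j1 < s i.succ →
          s i.castSucc < u j2 → u j2 < s i.succ → False := by
        intro j1 j2 h12 hA1 hA2 hB1 hB2
        have hj1k : (j1 : ℕ) + 1 < (d+1)/2 + 1 + 1 := by
          have := Fin.lt_def.1 h12; have := j2.isLt; omega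
        set j1s : Fin ((d+1)/2+1) := ⟨(j1 : ℕ) + 1, by omega⟩ with hj1s
        have hlt : t (Sum.inr j1) < t (Sum.inr j1s) := by
          simp only [htdef, Sum.elim_inr]
          exact hu (by rw [Fin.lt_def]; simp [hj1s])
        have hle : u j1s ≤ u j2 := by
          apply hu.monotone
          rw [Fin.le_def]
          have := Fin.lt_def.1 h12
          simp [hj1s]; omega
        have hbet : ∀ c, ¬ (t (Sum.inr j1) < t c ∧ t c < t (Sum.inr j1s)) := by
          rintro (i' | l) ⟨hc1, hc2⟩ <;>
            simp only [htdef, Sum.elim_inl, Sum.elim_inr] at hc1 hc2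
          · have hgap1 : s i.castSucc < s i' := lt_trans hA1 hc1
            have hgap2 : s i' < s i.succ := lt_of_lt_of_le (lt_of_lt_of_le hc2 hle) (le_of_lt hB2)
            have hl1 := Fin.lt_def.1 (hs.lt_iff_lt.1 hgap1)
            have hl2 := Fin.lt_def.1 (hs.lt_iff_lt.1 hgap2)
            simp only [Fin.coe_castSucc, Fin.val_succ] at hl1 hl2
            omega
          · have hl1 := Fin.lt_def.1 (hu.lt_iff_lt.1 hc1)
            have hl2 := Fin.lt_def.1 (hu.lt_iff_lt.1 hc2)
            simp only [hj1s] at hl2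
            omega
        have := halt hlt hbet
        have hn1 : w (Sum.inr j1) < 0 := by simp only [hwdef, Sum.elim_inr]; linarith [hbpos j1]
        have hn2 : w (Sum.inr j1s) < 0 := by simp only [hwdef, Sum.elim_inr]; linarith [hbpos j1s]
        nlinarith
      rcases lt_trichotomy j' j with hlt | heq | hgt
      · exact key j' j hlt hj'.1 hj'.2 hj.1 hj.2
      · exact hne heq
      · exact key j j' hgt hj.1 hj.2 hj'.1 hj'.2
  · -- interleave → crossing
    rintro ⟨hJ, hI⟩
    obtain ⟨w, hwnz, h0, h1⟩ := exists_dep hcard (fun c => momentCurve d (t c))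
    have hwne := momentCurve_dep_ne_zero hcard htinj h0 h1 hwnz
    have halt := fun {aa bb : Fin (d/2+1) ⊕ Fin ((d+1)/2+1)} (hab : t aa < t bb)
      (hbet : ∀ c, ¬ (t aa < t c ∧ t c < t bb)) =>
      momentCurve_dep_alternate hcard htinj h0 h1 hwne hab hbet
    -- consecutive s-points have the same sign, via the unique u in between
    have hadjSU : ∀ (i0 : Fin (d/2)) (j : Fin ((d+1)/2+1)),
        (s i0.castSucc < u j ∧ u j < s i0.succ) →
        (∀ l, (s i0.castSucc < u l ∧ u l < s i0.succ) → l = j) →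
        w (Sum.inl i0.castSucc) * w (Sum.inr j) < 0 ∧
        w (Sum.inr j) * w (Sum.inl i0.succ) < 0 := by
      intro i0 j hj hjuniq
      constructor
      · apply halt (by simp only [htdef, Sum.elim_inl, Sum.elim_inr]; exact hj.1)
        rintro (i' | l) ⟨hc1, hc2⟩ <;> simp only [htdef, Sum.elim_inl, Sum.elim_inr] at hc1 hc2
        · have h3 : s i' < s i0.succ := lt_trans hc2 hj.2
          have hl1 := Fin.lt_def.1 (hs.lt_iff_lt.1 hc1)
          have hl2 := Fin.lt_def.1 (hs.lt_iff_lt.1 h3)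
          simp only [Fin.coe_castSucc, Fin.val_succ] at hl1 hl2
          omega
        · have : l = j := hjuniq l ⟨hc1, lt_trans hc2 hj.2⟩
          rw [this] at hc2; exact lt_irrefl _ hc2
      · apply halt (by simp only [htdef, Sum.elim_inl, Sum.elim_inr]; exact hj.2)
        rintro (i' | l) ⟨hc1, hc2⟩ <;> simp only [htdef, Sum.elim_inl, Sum.elim_inr] at hc1 hc2
        · have h3 : s i0.castSucc < s i' := lt_trans hj.1 hc1
          have hl1 := Fin.lt_def.1 (hs.lt_iff_lt.1 h3)
          have hl2 := Fin.lt_def.1 (hs.lt_iff_lt.1 hc2)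
          simp only [Fin.coe_castSucc, Fin.val_succ] at hl1 hl2
          omega
        · have : l = j := hjuniq l ⟨lt_trans hj.1 hc1, hc2⟩
          rw [this] at hc1; exact lt_irrefl _ hc1
    have hadjUS : ∀ (j0 : Fin ((d+1)/2)) (i : Fin (d/2+1)),
        (u j0.castSucc < s i ∧ s i < u j0.succ) →
        (∀ l, (u j0.castSucc < s l ∧ s l < u j0.succ) → l = i) →
        w (Sum.inr j0.castSucc) * w (Sum.inl i) < 0 ∧
        w (Sum.inl i) * w (Sum.inr j0.succ) < 0 := by
      intro j0 i hi hiuniq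
      constructor
      · apply halt (by simp only [htdef, Sum.elim_inl, Sum.elim_inr]; exact hi.1)
        rintro (i' | l) ⟨hc1, hc2⟩ <;> simp only [htdef, Sum.elim_inl, Sum.elim_inr] at hc1 hc2
        · have : i' = i := hiuniq i' ⟨hc1, lt_trans hc2 hi.2⟩
          rw [this] at hc2; exact lt_irrefl _ hc2
        · have h3 : u l < u j0.succ := lt_trans hc2 hi.2
          have hl1 := Fin.lt_def.1 (hu.lt_iff_lt.1 hc1)
          have hl2 := Fin.lt_def.1 (hu.lt_iff_lt.1 h3)
          simp only [Fin.coe_castSucc, Fin.val_succ] at hl1 hl2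
          omega
      · apply halt (by simp only [htdef, Sum.elim_inl, Sum.elim_inr]; exact hi.2)
        rintro (i' | l) ⟨hc1, hc2⟩ <;> simp only [htdef, Sum.elim_inl, Sum.elim_inr] at hc1 hc2
        · have : i' = i := hiuniq i' ⟨lt_trans hi.1 hc1, hc2⟩
          rw [this] at hc1; exact lt_irrefl _ hc1
        · have h3 : u j0.castSucc < u l := lt_trans hi.1 hc1
          have hl1 := Fin.lt_def.1 (hu.lt_iff_lt.1 h3)
          have hl2 := Fin.lt_def.1 (hu.lt_iff_lt.1 hc2)
          simp only [Fin.coe_castSucc, Fin.val_succ] at hl1 hl2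
          omega
    have hconsecS : ∀ i0 : Fin (d/2), 0 < w (Sum.inl i0.castSucc) * w (Sum.inl i0.succ) := by
      intro i0
      obtain ⟨j, hj, hjuniq⟩ := hI i0
      obtain ⟨hA1, hA2⟩ := hadjSU i0 j hj hjuniq
      nlinarith [mul_pos_of_neg_of_neg hA1 hA2, sq_nonneg (w (Sum.inr j)),
        mul_self_pos.2 (hwne (Sum.inr j))]
    have hconsecU : ∀ j0 : Fin ((d+1)/2), 0 < w (Sum.inr j0.castSucc) * w (Sum.inr j0.succ) := by
      intro j0
      obtain ⟨i, hi, hiuniq⟩ := hJ j0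
      obtain ⟨hA1, hA2⟩ := hadjUS j0 i hi hiuniq
      nlinarith [mul_pos_of_neg_of_neg hA1 hA2, mul_self_pos.2 (hwne (Sum.inl i))]
    have hSs : ∀ i : Fin (d/2+1), 0 < w (Sum.inl 0) * w (Sum.inl i) := by
      intro i
      induction i using Fin.induction with
      | zero => exact mul_self_pos.2 (hwne (Sum.inl 0))
      | succ i0 ih =>
        have h2 := hconsecS i0
        nlinarith [mul_pos ih h2, mul_self_pos.2 (hwne (Sum.inl i0.castSucc))]
    have hUs : ∀ j : Fin ((d+1)/2+1), 0 < w (Sum.inr 0) * w (Sum.inr j) := by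
      intro j
      induction j using Fin.induction with
      | zero => exact mul_self_pos.2 (hwne (Sum.inr 0))
      | succ j0 ih =>
        have h2 := hconsecU j0
        nlinarith [mul_pos ih h2, mul_self_pos.2 (hwne (Sum.inr j0.castSucc))]
    have hcross0 : w (Sum.inl 0) * w (Sum.inr 0) < 0 := by
      rcases Nat.eq_zero_or_pos (d/2) with hk0 | hkpos
      · rcases Nat.eq_zero_or_pos ((d+1)/2) with hm0 | hmpos
        · -- only two points
          have hnz : s 0 ≠ u 0 := hdisj 0 0
          have honeS : ∀ i' : Fin (d/2+1), i' = 0 := fun i' => by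
            apply Fin.ext; have := i'.isLt; omega
          have honeU : ∀ l : Fin ((d+1)/2+1), l = 0 := fun l => by
            apply Fin.ext; have := l.isLt; omega
          rcases lt_or_gt_of_ne hnz with hlt | hgt
          · apply halt (aa := Sum.inl 0) (bb := Sum.inr 0)
              (by simp only [htdef, Sum.elim_inl, Sum.elim_inr]; exact hlt)
            rintro (i' | l) ⟨hc1, hc2⟩ <;>
              simp only [htdef, Sum.elim_inl, Sum.elim_inr] at hc1 hc2
            · rw [honeS i'] at hc1; exact lt_irrefl _ hc1
            · rw [honeU l] at hc2; exact lt_irrefl _ hc2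
          · have := halt (aa := Sum.inr 0) (bb := Sum.inl 0)
              (by simp only [htdef, Sum.elim_inl, Sum.elim_inr]; exact hgt) ?_
            · linarith [this, mul_comm (w (Sum.inr 0)) (w (Sum.inl 0))]
            rintro (i' | l) ⟨hc1, hc2⟩ <;>
              simp only [htdef, Sum.elim_inl, Sum.elim_inr] at hc1 hc2
            · rw [honeS i'] at hc2; exact lt_irrefl _ hc2
            · rw [honeU l] at hc1; exact lt_irrefl _ hc1
        · -- no s-gap, but u-gaps exist: use first u-gap
          set j0 : Fin ((d+1)/2) := ⟨0, hmpos⟩ with hj0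
          obtain ⟨i, hi, hiuniq⟩ := hJ j0
          obtain ⟨hA1, _⟩ := hadjUS j0 i hi hiuniq
          have hc : j0.castSucc = 0 := by apply Fin.ext; simp [hj0]
          rw [hc] at hA1
          nlinarith [hSs i, mul_self_pos.2 (hwne (Sum.inl i)), sq_nonneg (w (Sum.inl i))]
      · -- s-gaps exist: use first s-gap
        set i0 : Fin (d/2) := ⟨0, hkpos⟩ with hi0
        obtain ⟨j, hj, hjuniq⟩ := hI i0
        obtain ⟨hA1, _⟩ := hadjSU i0 j hj hjuniq
        have hc : i0.castSucc = 0 := by apply Fin.ext; simp [hi0]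
        rw [hc] at hA1
        nlinarith [hUs j, mul_self_pos.2 (hwne (Sum.inr j)), sq_nonneg (w (Sum.inr j))]
    have hcross : ∀ i j, w (Sum.inl i) * w (Sum.inr j) < 0 := by
      intro i j
      nlinarith [mul_pos (hSs i) (hUs j), hcross0, mul_self_pos.2 (hwne (Sum.inl 0)),
        mul_self_pos.2 (hwne (Sum.inr 0))]
    -- build a point from any suitably-signed dependence
    have hbuild : ∀ W : Fin (d/2+1) ⊕ Fin ((d+1)/2+1) → ℝ,
        (∑ c, W c = 0) → (∑ c, W c • momentCurve d (t c) = 0) →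
        (∀ i, 0 < W (Sum.inl i)) → (∀ j, W (Sum.inr j) < 0) →
        (intrinsicInterior ℝ (convexHull ℝ (Set.range P)) ∩
          intrinsicInterior ℝ (convexHull ℝ (Set.range Q))).Nonempty := by
      intro W hW0 hW1 hWp hWn
      obtain ⟨A, hAdef⟩ : ∃ A : ℝ, A = ∑ i, W (Sum.inl i) := ⟨_, rfl⟩
      have hApos : 0 < A := hAdef ▸ Finset.sum_pos (fun i _ => hWp i) Finset.univ_nonempty
      have hsplit := hW0
      rw [Fintype.sum_sum_type, ← hAdef] at hsplit
      have hBsum : ∑ j, W (Sum.inr j) = -A := by linarith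
      set aa : Fin (d/2+1) → ℝ := fun i => W (Sum.inl i) / A with haadef
      set bb : Fin ((d+1)/2+1) → ℝ := fun j => -(W (Sum.inr j)) / A with hbbdef
      have haa_pos : ∀ i, 0 < aa i := fun i => div_pos (hWp i) hApos
      have hbb_pos : ∀ j, 0 < bb j := fun j => div_pos (by linarith [hWn j]) hApos
      have haa_sum : ∑ i, aa i = 1 := by
        simp only [haadef]
        rw [← Finset.sum_div, ← hAdef, div_self (ne_of_gt hApos)]

      have hbb_sum : ∑ j, bb j = 1 := by
        simp only [hbbdef]
        rw [← Finset.sum_div, Finset.sum_neg_distrib, hBsum, neg_neg,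
          div_self (ne_of_gt hApos)]
      have hvec := hW1
      rw [Fintype.sum_sum_type] at hvec
      have hS1 : ∑ i, W (Sum.inl i) • momentCurve d (s i)
          = - ∑ j, W (Sum.inr j) • momentCurve d (u j) := by
        have : ∑ i, W (Sum.inl i) • momentCurve d (t (Sum.inl i))
            + ∑ j, W (Sum.inr j) • momentCurve d (t (Sum.inr j)) = 0 := hvec
        simp only [htdef, Sum.elim_inl, Sum.elim_inr] at this
        linear_combination (norm := module) this
      have hxeq : ∑ i, aa i • P i = ∑ j, bb j • Q j := by
        have e1 : ∑ i, aa i • P i = A⁻¹ • ∑ i, W (Sum.inl i) • momentCurve d (s i) := by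
          rw [Finset.smul_sum]
          apply Finset.sum_congr rfl
          intro i _
          simp only [haadef, hPdef, div_eq_inv_mul, mul_smul]
        have e2 : ∑ j, bb j • Q j = A⁻¹ • (- ∑ j, W (Sum.inr j) • momentCurve d (u j)) := by
          rw [← Finset.sum_neg_distrib, Finset.smul_sum]
          apply Finset.sum_congr rfl
          intro j _
          simp only [hbbdef, hQdef, div_eq_inv_mul, mul_smul, neg_smul, smul_neg]
        rw [e1, e2, hS1]
      refine ⟨∑ i, aa i • P i, ?_, ?_⟩
      · have hind : AffineIndependent ℝ P := by
          rw [hPdef]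
          exact momentCurve_affineIndependent (by simp; omega) hs.injective
        exact pos_combo_mem_intrinsicInterior hind haa_pos haa_sum
      · have hind : AffineIndependent ℝ Q := by
          rw [hQdef]
          exact momentCurve_affineIndependent (by simp; omega) hu.injective
        rw [hxeq]
        exact pos_combo_mem_intrinsicInterior hind hbb_pos hbb_sum
    rcases (hwne (Sum.inl 0)).lt_or_gt with hneg | hpos
    · -- use -w
      apply hbuild (fun c => -(w c))
      · rw [Finset.sum_neg_distrib, h0, neg_zero]
      · simp only [neg_smul]
        rw [Finset.sum_neg_distrib, h1, neg_zero]
      · intro i; have := hSs i; nlinarith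
      · intro j; have := hcross 0 j; nlinarith
    · apply hbuild w h0 h1
      · intro i; have := hSs i; nlinarith
      · intro j; have := hcross 0 j; nlinarith
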